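/- Consider an SSG with the best-response follower in which the leader is myopic, γ_A = 0. Let L be a Pareto-compliant scalarization and ε ∈ [0,1). Let f_0 be any leader policy, let {f_t} satisfy f_{t+1} ∈ W_{1−ε}(f_t) for all t ≥ 0, set v_t := V_A^{f_t†}, and let v_∞ := lim_{t→∞} v_t (which exists). Then v_∞ ∈ 𝒫𝒱, i.e., v_∞ is a Pareto-optimal value function. -/

import Mathlib

open Finset

/-- A probability distribution on a finite type, represented as a function. -/
def IsDist {α : Type*} [Fintype α] (d : α → ℝ) : Prop :=
  (∀ x, 0 ≤ d x) ∧ ∑ x, d x = 1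

/-- A (stationary stochastic) policy: a distribution over actions at each state. -/
def IsPol {S α : Type*} [Fintype α] (f : S → α → ℝ) : Prop :=
  ∀ s, IsDist (f s)

/-- A deterministic policy viewed as a stochastic one. -/
noncomputable def det {S α : Type*} [DecidableEq α] (g : S → α) : S → α → ℝ :=
  fun s a => if a = g s then 1 else 0

/-- `V` is the value function of the policy pair `(f, g)` for reward `r`,
discount `γ` and transition kernel `p`, i.e. `V` satisfies the Bellman
expectation equation (whose solution is unique since `γ < 1`). -/
def IsValue {S A B : Type*} [Fintype S] [Fintype A] [Fintype B]
    (p : S → A → B → S → ℝ) (r : S → A → B → ℝ) (γ : ℝ)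
    (f : S → A → ℝ) (g : S → B → ℝ) (V : S → ℝ) : Prop :=
  ∀ s, V s = ∑ a, ∑ b, f s a * g s b * (r s a b + γ * ∑ s', p s a b s' * V s')

/-- Weak dominance `v ≽ w`. -/
def DomGE {S : Type*} (v w : S → ℝ) : Prop := ∀ s, w s ≤ v s

/-- Strict dominance `v ≻ w`. -/
def SDom {S : Type*} (v w : S → ℝ) : Prop := DomGE v w ∧ v ≠ w

/-- A two-player stochastic Stackelberg game together with its value functions:
finite state/action spaces, transition kernel, bounded rewards, discount rates
in `[0,1)`, and for every pair of (stochastic) policies the associated value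
functions `VA`, `VB`, characterized as the (unique) solutions of the Bellman
expectation equations. -/
structure SSGVal (S A B : Type*) [Fintype S] [Fintype A] [Fintype B] where
  p : S → A → B → S → ℝ
  hp : ∀ s a b, IsDist (p s a b)
  rA : S → A → B → ℝ
  rB : S → A → B → ℝ
  gA : ℝ
  gB : ℝ
  hgA0 : 0 ≤ gA
  hgA1 : gA < 1
  hgB0 : 0 ≤ gB
  hgB1 : gB < 1
  VA : (S → A → ℝ) → (S → B → ℝ) → S → ℝ
  VB : (S → A → ℝ) → (S → B → ℝ) → S → ℝ
  hVA : ∀ f g, IsPol f → IsPol g → IsValue p rA gA f g (VA f g)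
  hVB : ∀ f g, IsPol f → IsPol g → IsValue p rB gB f g (VB f g)

/-- An SSG with a best-response follower: `Rstar f` is the unique deterministic
best response of the follower to the leader policy `f`. -/
structure Setup (S A B : Type*) [Fintype S] [Fintype A] [Fintype B] [DecidableEq B]
    extends SSGVal S A B where
  Rstar : (S → A → ℝ) → S → B
  hRstar : ∀ f, IsPol f → ∀ g, IsPol g → ∀ s, VB f g s ≤ VB f (det (Rstar f)) s
  hRstarU : ∀ f, IsPol f → ∀ h : S → B,
      (∀ g, IsPol g → ∀ s, VB f g s ≤ VB f (det h) s) → h = Rstar f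

namespace Setup

variable {S A B : Type*} [Fintype S] [Fintype A] [Fintype B] [DecidableEq B]

/-- `V_A^{f†}`: the leader's value under the best-response follower. -/
noncomputable def VAdag (M : Setup S A B) (f : S → A → ℝ) : S → ℝ :=
  M.VA f (det (M.Rstar f))

/-- Marginalized leader reward `r_A(s, f(s), b)`. -/
def rAf (M : Setup S A B) (f : S → A → ℝ) (s : S) (b : B) : ℝ :=
  ∑ a, f s a * M.rA s a b

/-- Marginalized transition `p(s' | s, f(s), b)`. -/
def pf (M : Setup S A B) (f : S → A → ℝ) (s : S) (b : B) (s' : S) : ℝ :=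
  ∑ a, f s a * M.p s a b s'

/-- `Q_A^{f'†}(s, f)`. -/
noncomputable def Q (M : Setup S A B) (f' f : S → A → ℝ) (s : S) : ℝ :=
  M.rAf f s (M.Rstar f s) + M.gA * ∑ s', M.pf f s (M.Rstar f s) s' * M.VAdag f' s'

/-- `𝒱`: the set of reachable leader value functions under the best-response follower. -/
def Vset (M : Setup S A B) : Set (S → ℝ) := {v | ∃ f, IsPol f ∧ v = M.VAdag f}

/-- `𝒫𝒱`: the set of Pareto-optimal value functions in `cl 𝒱`. -/
def PV (M : Setup S A B) : Set (S → ℝ) :=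
  {v | v ∈ closure M.Vset ∧ ¬ ∃ w ∈ closure M.Vset, SDom w v}

/-- `W_≽(f')`: policies satisfying the policy-improvement condition from `f'`. -/
noncomputable def Wge (M : Setup S A B) (f' : S → A → ℝ) : Set (S → A → ℝ) :=
  {f | IsPol f ∧ ∀ s, M.VAdag f' s ≤ M.Q f' f s}

/-- `W_{1-ε}(f')`: ε-optimal improving policies for the scalarization `L`. -/
noncomputable def Weps (M : Setup S A B) (L : (S → ℝ) → ℝ) (ε : ℝ) (f' : S → A → ℝ) :
    Set (S → A → ℝ) :=
  {f | f ∈ M.Wge f' ∧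
    (1 - ε) * sSup ((fun h => L (M.Q f' h) - L (M.VAdag f')) '' M.Wge f')
      ≤ L (M.Q f' f) - L (M.VAdag f')}

end Setup

section Aux

open Filter Topology

variable {S A B : Type*} [Fintype S] [Fintype A] [Fintype B]
  [Nonempty S] [Nonempty A] [Nonempty B] [DecidableEq B]

lemma isPol_det {α : Type*} [Fintype α] [DecidableEq α] (g : S → α) : IsPol (det g) := by
  intro s
  refine ⟨fun a => ?_, ?_⟩
  · unfold det; split <;> norm_num
  · simp [det]

/-- Expectation bound: `|E_{a,b}[X]| ≤ C` when `|X| ≤ C`. -/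
lemma abs_expect_le {α β : Type*} [Fintype α] [Fintype β] {f : α → ℝ} {g : β → ℝ}
    (hf : IsDist f) (hg : IsDist g) (X : α → β → ℝ) {C : ℝ}
    (hC : ∀ a b, |X a b| ≤ C) :
    |∑ a, ∑ b, f a * g b * X a b| ≤ C := by
  have h1 : |∑ a, ∑ b, f a * g b * X a b| ≤ ∑ a, ∑ b, f a * g b * C := by
    refine (Finset.abs_sum_le_sum_abs _ _).trans (Finset.sum_le_sum fun a _ => ?_)
    refine (Finset.abs_sum_le_sum_abs _ _).trans (Finset.sum_le_sum fun b _ => ?_)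
    rw [abs_mul, abs_mul, abs_of_nonneg (hf.1 a), abs_of_nonneg (hg.1 b), mul_assoc, mul_assoc]
    exact mul_le_mul_of_nonneg_left
      (mul_le_mul_of_nonneg_left (hC a b) (hg.1 b)) (hf.1 a)
  have h2 : ∑ a, ∑ b, f a * g b * C = C := by
    have hb : ∀ a, ∑ b, f a * g b * C = f a * C := by
      intro a
      have : ∑ b, f a * g b * C = (∑ b, g b) * (f a * C) := by
        rw [Finset.sum_mul]; exact Finset.sum_congr rfl fun b _ => by ring
      rw [this, hg.2, one_mul]
    rw [Finset.sum_congr rfl fun a _ => hb a, ← Finset.sum_mul, hf.2, one_mul]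
  linarith

lemma abs_expect_le' {α β : Type*} [Fintype α] [Fintype β] (w : α → ℝ) {g : β → ℝ}
    (hg : IsDist g) (X : α → β → ℝ) {C : ℝ} (hC0 : 0 ≤ C) (hC : ∀ a b, |X a b| ≤ C) :
    |∑ a, ∑ b, w a * g b * X a b| ≤ (∑ a, |w a|) * C := by
  have h1 : |∑ a, ∑ b, w a * g b * X a b| ≤ ∑ a, ∑ b, |w a| * g b * C := by
    refine (Finset.abs_sum_le_sum_abs _ _).trans (Finset.sum_le_sum fun a _ => ?_)
    refine (Finset.abs_sum_le_sum_abs _ _).trans (Finset.sum_le_sum fun b _ => ?_)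
    rw [abs_mul, abs_mul, abs_of_nonneg (hg.1 b), mul_assoc, mul_assoc]
    exact mul_le_mul_of_nonneg_left
      (mul_le_mul_of_nonneg_left (hC a b) (hg.1 b)) (abs_nonneg _)
  have h2 : ∑ a, ∑ b, |w a| * g b * C = (∑ a, |w a|) * C := by
    have hb : ∀ a, ∑ b, |w a| * g b * C = |w a| * C := by
      intro a
      have : ∑ b, |w a| * g b * C = (∑ b, g b) * (|w a| * C) := by
        rw [Finset.sum_mul]; exact Finset.sum_congr rfl fun b _ => by ring
      rw [this, hg.2, one_mul]
    rw [Finset.sum_congr rfl fun a _ => hb a, ← Finset.sum_mul]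
  linarith

lemma abs_sum_dist_le {α : Type*} [Fintype α] {p : α → ℝ} (hp : IsDist p) (V : α → ℝ)
    {C : ℝ} (hC : ∀ x, |V x| ≤ C) : |∑ x, p x * V x| ≤ C := by
  have h1 : |∑ x, p x * V x| ≤ ∑ x, p x * C := by
    refine (Finset.abs_sum_le_sum_abs _ _).trans (Finset.sum_le_sum fun x _ => ?_)
    rw [abs_mul, abs_of_nonneg (hp.1 x)]
    exact mul_le_mul_of_nonneg_left (hC x) (hp.1 x)
  rw [← Finset.sum_mul, hp.2, one_mul] at h1
  exact h1

/-- A uniform bound on `|r_B|`. -/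
noncomputable def Rmax (M : Setup S A B) : ℝ := ∑ s, ∑ a, ∑ b, |M.rB s a b|

lemma rB_le_Rmax (M : Setup S A B) (s : S) (a : A) (b : B) : |M.rB s a b| ≤ Rmax M := by
  have h1 : |M.rB s a b| ≤ ∑ b', |M.rB s a b'| :=
    Finset.single_le_sum (f := fun b' => |M.rB s a b'|) (fun _ _ => abs_nonneg _)
      (Finset.mem_univ b)
  have h2 : (∑ b', |M.rB s a b'|) ≤ ∑ a', ∑ b', |M.rB s a' b'| :=
    Finset.single_le_sum (f := fun a' => ∑ b', |M.rB s a' b'|)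
      (fun _ _ => Finset.sum_nonneg fun _ _ => abs_nonneg _) (Finset.mem_univ a)
  have h3 : (∑ a', ∑ b', |M.rB s a' b'|) ≤ Rmax M :=
    Finset.single_le_sum (f := fun s' => ∑ a', ∑ b', |M.rB s' a' b'|)
      (fun _ _ => Finset.sum_nonneg fun _ _ => Finset.sum_nonneg fun _ _ => abs_nonneg _)
      (Finset.mem_univ s)
  linarith

lemma Rmax_nonneg (M : Setup S A B) : 0 ≤ Rmax M :=
  Finset.sum_nonneg fun _ _ => Finset.sum_nonneg fun _ _ =>
    Finset.sum_nonneg fun _ _ => abs_nonneg _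

lemma one_sub_gB_pos (M : Setup S A B) : 0 < 1 - M.gB := by linarith [M.hgB1]

lemma VB_bound (M : Setup S A B) {f : S → A → ℝ} {g : S → B → ℝ}
    (hf : IsPol f) (hg : IsPol g) (s : S) :
    |M.VB f g s| ≤ Rmax M / (1 - M.gB) := by
  obtain ⟨s₀, -, hs₀⟩ := Finset.exists_max_image Finset.univ (fun s' => |M.VB f g s'|)
    ⟨Classical.arbitrary S, Finset.mem_univ _⟩
  have key : |M.VB f g s₀| ≤ Rmax M + M.gB * |M.VB f g s₀| := by
    conv_lhs => rw [M.hVB f g hf hg s₀]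
    refine abs_expect_le (hf s₀) (hg s₀) _ fun a b => ?_
    have h2 : |∑ s', M.p s₀ a b s' * M.VB f g s'| ≤ |M.VB f g s₀| :=
      abs_sum_dist_le (M.hp s₀ a b) _ fun x => hs₀ x (Finset.mem_univ x)
    calc |M.rB s₀ a b + M.gB * ∑ s', M.p s₀ a b s' * M.VB f g s'|
        ≤ |M.rB s₀ a b| + |M.gB * ∑ s', M.p s₀ a b s' * M.VB f g s'| := abs_add_le _ _
      _ ≤ Rmax M + M.gB * |M.VB f g s₀| := by
          rw [abs_mul, abs_of_nonneg M.hgB0]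
          exact add_le_add (rB_le_Rmax M s₀ a b)
            (mul_le_mul_of_nonneg_left h2 M.hgB0)
  have hpos := one_sub_gB_pos M
  have h0 : |M.VB f g s₀| ≤ Rmax M / (1 - M.gB) := by
    rw [le_div_iff₀ hpos]; nlinarith
  exact (hs₀ s (Finset.mem_univ s)).trans h0

/-- Lipschitz-type bound for `V_B` in the leader policy. -/
lemma VB_lip (M : Setup S A B) {f f' : S → A → ℝ} {g : S → B → ℝ}
    (hf : IsPol f) (hf' : IsPol f') (hg : IsPol g) (s : S) :
    |M.VB f g s - M.VB f' g s| ≤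
      (Rmax M + M.gB * (Rmax M / (1 - M.gB))) * (∑ t, ∑ a, |f t a - f' t a|) / (1 - M.gB) := by
  set K : ℝ := Rmax M + M.gB * (Rmax M / (1 - M.gB)) with hK
  set D : ℝ := ∑ t, ∑ a, |f t a - f' t a| with hD
  have hpos := one_sub_gB_pos M
  have hK0 : 0 ≤ K := add_nonneg (Rmax_nonneg M)
    (mul_nonneg M.hgB0 (div_nonneg (Rmax_nonneg M) hpos.le))
  have hD0 : 0 ≤ D := Finset.sum_nonneg fun _ _ => Finset.sum_nonneg fun _ _ => abs_nonneg _
  obtain ⟨s₀, -, hs₀⟩ := Finset.exists_max_image Finset.univ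
    (fun s' => |M.VB f g s' - M.VB f' g s'|) ⟨Classical.arbitrary S, Finset.mem_univ _⟩
  have hdec : M.VB f g s₀ - M.VB f' g s₀ =
      (∑ a, ∑ b, f s₀ a * g s₀ b *
        (M.gB * ∑ s', M.p s₀ a b s' * (M.VB f g s' - M.VB f' g s')))
      + (∑ a, ∑ b, (f s₀ a - f' s₀ a) * g s₀ b *
        (M.rB s₀ a b + M.gB * ∑ s', M.p s₀ a b s' * M.VB f' g s')) := by
    conv_lhs => rw [M.hVB f g hf hg s₀, M.hVB f' g hf' hg s₀]
    rw [← Finset.sum_sub_distrib, ← Finset.sum_add_distrib]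
    refine Finset.sum_congr rfl fun a _ => ?_
    rw [← Finset.sum_sub_distrib, ← Finset.sum_add_distrib]
    refine Finset.sum_congr rfl fun b _ => ?_
    have hps : ∑ s', M.p s₀ a b s' * (M.VB f g s' - M.VB f' g s')
        = (∑ s', M.p s₀ a b s' * M.VB f g s') - ∑ s', M.p s₀ a b s' * M.VB f' g s' := by
      rw [← Finset.sum_sub_distrib]; exact Finset.sum_congr rfl fun _ _ => by ring
    rw [hps]; ring
  have hA : |∑ a, ∑ b, f s₀ a * g s₀ b *
      (M.gB * ∑ s', M.p s₀ a b s' * (M.VB f g s' - M.VB f' g s'))|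
      ≤ M.gB * |M.VB f g s₀ - M.VB f' g s₀| := by
    refine abs_expect_le (hf s₀) (hg s₀) _ fun a b => ?_
    rw [abs_mul, abs_of_nonneg M.hgB0]
    refine mul_le_mul_of_nonneg_left ?_ M.hgB0
    exact abs_sum_dist_le (M.hp s₀ a b) _ fun x => hs₀ x (Finset.mem_univ x)
  have hB : |∑ a, ∑ b, (f s₀ a - f' s₀ a) * g s₀ b *
      (M.rB s₀ a b + M.gB * ∑ s', M.p s₀ a b s' * M.VB f' g s')|
      ≤ (∑ a, |f s₀ a - f' s₀ a|) * K := by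
    refine abs_expect_le' _ (hg s₀) _ hK0 fun a b => ?_
    calc |M.rB s₀ a b + M.gB * ∑ s', M.p s₀ a b s' * M.VB f' g s'|
        ≤ |M.rB s₀ a b| + |M.gB * ∑ s', M.p s₀ a b s' * M.VB f' g s'| := abs_add_le _ _
      _ ≤ K := by
          rw [hK, abs_mul, abs_of_nonneg M.hgB0]
          exact add_le_add (rB_le_Rmax M s₀ a b) (mul_le_mul_of_nonneg_left
            (abs_sum_dist_le (M.hp s₀ a b) _ fun x => VB_bound M hf' hg x) M.hgB0)
  have hsub : (∑ a, |f s₀ a - f' s₀ a|) ≤ D :=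
    Finset.single_le_sum (f := fun t => ∑ a, |f t a - f' t a|)
      (fun _ _ => Finset.sum_nonneg fun _ _ => abs_nonneg _) (Finset.mem_univ s₀)
  have key : |M.VB f g s₀ - M.VB f' g s₀| ≤ M.gB * |M.VB f g s₀ - M.VB f' g s₀| + K * D := by
    conv_lhs => rw [hdec]
    refine (abs_add_le _ _).trans ?_
    have := mul_le_mul_of_nonneg_right hsub hK0
    nlinarith [hB, hA]
  have h0 : |M.VB f g s₀ - M.VB f' g s₀| ≤ K * D / (1 - M.gB) := by
    rw [le_div_iff₀ hpos]; nlinarith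
  exact (hs₀ s (Finset.mem_univ s)).trans h0

/-- Continuity of `V_B` in the leader policy, on the set of policies. -/
lemma VB_cont (M : Setup S A B) {g : S → B → ℝ} (hg : IsPol g) (s : S) :
    Continuous (fun x : {h : S → A → ℝ // IsPol h} => M.VB x.1 g s) := by
  rw [continuous_iff_continuousAt]
  intro x₀
  set K : ℝ := Rmax M + M.gB * (Rmax M / (1 - M.gB)) with hK
  have hDc : Continuous (fun x : {h : S → A → ℝ // IsPol h} =>
      ∑ t, ∑ a, |x.1 t a - x₀.1 t a|) := by
    refine continuous_finset_sum _ fun t _ => continuous_finset_sum _ fun a _ => ?_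
    exact (((continuous_apply_apply t a).comp continuous_subtype_val).sub
      continuous_const).abs
  have h0 : Filter.Tendsto (fun x : {h : S → A → ℝ // IsPol h} =>
      K * (∑ t, ∑ a, |x.1 t a - x₀.1 t a|) / (1 - M.gB)) (nhds x₀) (nhds 0) := by
    have := ((hDc.tendsto x₀).const_mul K).div_const (1 - M.gB)
    simpa using this
  have hsq : Filter.Tendsto (fun x : {h : S → A → ℝ // IsPol h} =>
      |M.VB x.1 g s - M.VB x₀.1 g s|) (nhds x₀) (nhds 0) := by
    refine squeeze_zero (fun _ => abs_nonneg _) (fun x => ?_) h0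
    exact VB_lip M x.2 x₀.2 hg s
  have hsub : Filter.Tendsto (fun x : {h : S → A → ℝ // IsPol h} =>
      M.VB x.1 g s - M.VB x₀.1 g s) (nhds x₀) (nhds 0) :=
    (tendsto_zero_iff_abs_tendsto_zero _).mpr hsq
  have := hsub.add_const (M.VB x₀.1 g s)
  simpa [ContinuousAt] using this

lemma convex_isPol : Convex ℝ {h : S → A → ℝ | IsPol h} := by
  intro x hx y hy a b ha hb hab
  intro s
  refine ⟨fun a' => ?_, ?_⟩
  · have h1 := (hx s).1 a'
    have h2 := (hy s).1 a'
    simp only [Pi.add_apply, Pi.smul_apply, smul_eq_mul]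
    nlinarith
  · simp only [Pi.add_apply, Pi.smul_apply, smul_eq_mul]
    rw [Finset.sum_add_distrib, ← Finset.mul_sum, ← Finset.mul_sum, (hx s).2, (hy s).2]
    simpa using hab

/-- The unique best response is the same for every leader policy. -/
lemma Rstar_const (M : Setup S A B) {f f' : S → A → ℝ} (hf : IsPol f) (hf' : IsPol f') :
    M.Rstar f = M.Rstar f' := by
  haveI : PreconnectedSpace {h : S → A → ℝ // IsPol h} := by
    have h1 : IsPreconnected {h : S → A → ℝ | IsPol h} := convex_isPol.isPreconnected
    exact Subtype.preconnectedSpace h1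
  let Dset : (S → B) → Set {h : S → A → ℝ // IsPol h} := fun g =>
    {x | ∀ g', IsPol g' → ∀ s, M.VB x.1 g' s ≤ M.VB x.1 (det g) s}
  have hmem : ∀ (x : {h : S → A → ℝ // IsPol h}) (g : S → B),
      x ∈ Dset g ↔ M.Rstar x.1 = g := by
    intro x g
    constructor
    · intro h
      exact (M.hRstarU x.1 x.2 g h).symm
    · intro h g' hg' s
      rw [← h]
      exact M.hRstar x.1 x.2 g' hg' s
  have hclosed : ∀ g, IsClosed (Dset g) := by
    intro g
    have heq : Dset g = ⋂ g', ⋂ (_ : IsPol g'), ⋂ s,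
        {x : {h : S → A → ℝ // IsPol h} | M.VB x.1 g' s ≤ M.VB x.1 (det g) s} := by
      ext x
      simp only [Set.mem_iInter, Set.mem_setOf_eq, Dset]
    rw [heq]
    exact isClosed_iInter fun g' => isClosed_iInter fun hg' => isClosed_iInter fun s =>
      isClosed_le (VB_cont M hg' s) (VB_cont M (isPol_det g) s)
  have hopen : ∀ g, IsOpen (Dset g) := by
    intro g
    rw [← isClosed_compl_iff]
    have hcompl : (Dset g)ᶜ = ⋃ g' ∈ {g' : S → B | g' ≠ g}, Dset g' := by
      ext x
      simp only [Set.mem_compl_iff, Set.mem_iUnion, Set.mem_setOf_eq, hmem, exists_prop]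
      constructor
      · intro h
        exact ⟨M.Rstar x.1, h, rfl⟩
      · rintro ⟨g', hne, hx⟩
        rw [hx]; exact hne
    rw [hcompl]
    exact Set.Finite.isClosed_biUnion (Set.toFinite _) fun g' _ => hclosed g'
  have key : ∀ g, Dset g = ∅ ∨ Dset g = Set.univ := fun g =>
    isClopen_iff.mp ⟨hclosed g, hopen g⟩
  have hx : (⟨f, hf⟩ : {h : S → A → ℝ // IsPol h}) ∈ Dset (M.Rstar f) :=
    (hmem _ _).mpr rfl
  rcases key (M.Rstar f) with h | h
  · rw [h] at hx
    exact absurd hx (Set.notMem_empty _)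
  · have hx' : (⟨f', hf'⟩ : {h : S → A → ℝ // IsPol h}) ∈ Dset (M.Rstar f) := by
      rw [h]; trivial
    exact ((hmem _ _).mp hx').symm

/-- Explicit formula for `V_A^{f†}` in the myopic case. -/
lemma VAdag_eq (M : Setup S A B) (h0 : M.gA = 0) {f : S → A → ℝ} (hf : IsPol f) (s : S) :
    M.VAdag f s = ∑ a, f s a * M.rA s a (M.Rstar f s) := by
  have hv := M.hVA f (det (M.Rstar f)) hf (isPol_det _) s
  rw [Setup.VAdag, hv, h0]
  simp [det, mul_ite, ite_mul, mul_zero, zero_mul, mul_one, Finset.sum_ite_eq']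

lemma Q_eq (M : Setup S A B) (h0 : M.gA = 0) (f' f : S → A → ℝ) (s : S) :
    M.Q f' f s = ∑ a, f s a * M.rA s a (M.Rstar f s) := by
  simp only [Setup.Q, Setup.rAf, h0, zero_mul, add_zero]

/-- In the myopic case, the set of reachable value functions is compact. -/
lemma Vset_compact (M : Setup S A B) (h0 : M.gA = 0) : IsCompact M.Vset := by
  classical
  set u : S → A → ℝ := fun _ _ => (Fintype.card A : ℝ)⁻¹ with hu
  have hupol : IsPol u := by
    intro s
    constructor
    · intro a
      positivity
    · rw [Finset.sum_const, Finset.card_univ, nsmul_eq_mul,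
        mul_inv_cancel₀ (Nat.cast_ne_zero.mpr Fintype.card_ne_zero)]
  have himg : M.Vset =
      (fun h s => ∑ a, h s a * M.rA s a (M.Rstar u s)) '' {h : S → A → ℝ | IsPol h} := by
    ext v
    constructor
    · rintro ⟨h, hh, rfl⟩
      refine ⟨h, hh, ?_⟩
      funext s
      rw [← Rstar_const M hh hupol]
      show ∑ a, h s a * M.rA s a (M.Rstar h s) = M.VAdag h s
      rw [← VAdag_eq M h0 hh s]
    · rintro ⟨h, hh, rfl⟩
      refine ⟨h, hh, ?_⟩
      funext s
      rw [VAdag_eq M h0 hh s, Rstar_const M hh hupol]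
  have hPc : IsCompact {h : S → A → ℝ | IsPol h} := by
    have heq : {h : S → A → ℝ | IsPol h} = Set.pi Set.univ (fun _ : S => stdSimplex ℝ A) := by
      ext h
      simp [IsPol, IsDist, stdSimplex, Set.mem_pi]
    rw [heq]
    exact isCompact_univ_pi fun _ => isCompact_stdSimplex ℝ A
  have hΦc : Continuous (fun (h : S → A → ℝ) (s : S) => ∑ a, h s a * M.rA s a (M.Rstar u s)) :=
    continuous_pi fun s => continuous_finset_sum _ fun a _ =>
      by fun_prop
  rw [himg]
  exact hPc.image hΦc

end Aux


theorem stmt18 {S A B : Type*} [Fintype S] [Fintype A] [Fintype B]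
    [Nonempty S] [Nonempty A] [Nonempty B] [DecidableEq B]
    (M : Setup S A B)
    (L : (S → ℝ) → ℝ) (hLc : Continuous L)
    (hLp : ∀ v w : S → ℝ, SDom v w → L w < L v)
    (ε : ℝ) (hε0 : 0 ≤ ε) (hε1 : ε < 1)
    (f : ℕ → S → A → ℝ) (hf0 : IsPol (f 0))
    (hstep : ∀ t, f (t + 1) ∈ M.Weps L ε (f t))
    (hmyopic : M.gA = 0)
    (vinf : S → ℝ)
    (hvinf : Filter.Tendsto (fun t => M.VAdag (f t)) Filter.atTop (nhds vinf)) :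
    vinf ∈ M.PV := by
  have hpol : ∀ t, IsPol (f t) := by
    intro t
    induction t with
    | zero => exact hf0
    | succ n _ => exact (hstep n).1.1
  have hQ : ∀ (f' : S → A → ℝ) {h : S → A → ℝ}, IsPol h → M.Q f' h = M.VAdag h := by
    intro f' h hh
    funext s
    rw [Q_eq M hmyopic, VAdag_eq M hmyopic hh]
  have hmono : ∀ t s, M.VAdag (f t) s ≤ M.VAdag (f (t + 1)) s := by
    intro t s
    have := (hstep t).1.2 s
    rwa [hQ (f t) (hpol (t + 1))] at this
  have hvs : ∀ s, Filter.Tendsto (fun t => M.VAdag (f t) s) Filter.atTop (nhds (vinf s)) :=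
    fun s => tendsto_pi_nhds.mp hvinf s
  have hle : ∀ t s, M.VAdag (f t) s ≤ vinf s := by
    intro t s
    exact Monotone.ge_of_tendsto (monotone_nat_of_le_succ fun n => hmono n s) (hvs s) t
  have hcl : vinf ∈ closure M.Vset :=
    mem_closure_of_tendsto hvinf (Filter.Eventually.of_forall fun t => ⟨f t, hpol t, rfl⟩)
  refine ⟨hcl, ?_⟩
  rintro ⟨w, hw, hdom⟩
  have hVc := Vset_compact M hmyopic
  rw [hVc.isClosed.closure_eq] at hw
  obtain ⟨h, hh, rfl⟩ := hw
  obtain ⟨C, hC⟩ := hVc.bddAbove_image hLc.continuousOn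
  have hbdd : ∀ t, BddAbove ((fun h' => L (M.Q (f t) h') - L (M.VAdag (f t))) '' M.Wge (f t)) := by
    intro t
    refine ⟨C - L (M.VAdag (f t)), ?_⟩
    rintro y ⟨h', hh', rfl⟩
    have hCle : L (M.Q (f t) h') ≤ C := by
      rw [hQ (f t) hh'.1]
      exact hC ⟨M.VAdag h', ⟨h', hh'.1, rfl⟩, rfl⟩
    simp only
    linarith
  have hmemW : ∀ t, h ∈ M.Wge (f t) := by
    intro t
    refine ⟨hh, fun s => ?_⟩
    rw [hQ (f t) hh]
    exact (hle t s).trans (hdom.1 s)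
  have hkey : ∀ t, (1 - ε) * (L (M.VAdag h) - L (M.VAdag (f t)))
      ≤ L (M.VAdag (f (t + 1))) - L (M.VAdag (f t)) := by
    intro t
    have h1 : L (M.VAdag h) - L (M.VAdag (f t))
        ≤ sSup ((fun h' => L (M.Q (f t) h') - L (M.VAdag (f t))) '' M.Wge (f t)) := by
      have := le_csSup (hbdd t) (Set.mem_image_of_mem
        (fun h' => L (M.Q (f t) h') - L (M.VAdag (f t))) (hmemW t))
      rwa [hQ (f t) hh] at this
    have h2 := (hstep t).2
    rw [hQ (f t) (hpol (t + 1))] at h2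
    have h3 := mul_le_mul_of_nonneg_left h1 (by linarith : (0:ℝ) ≤ 1 - ε)
    linarith
  have hLv : Filter.Tendsto (fun t => L (M.VAdag (f t))) Filter.atTop (nhds (L vinf)) :=
    (hLc.tendsto vinf).comp hvinf
  have hLshift : Filter.Tendsto (fun t => L (M.VAdag (f (t + 1)))) Filter.atTop
      (nhds (L vinf)) := hLv.comp (Filter.tendsto_add_atTop_nat 1)
  have hfinal : (1 - ε) * (L (M.VAdag h) - L vinf) ≤ 0 := by
    have hT1 : Filter.Tendsto (fun t => (1 - ε) * (L (M.VAdag h) - L (M.VAdag (f t))))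
        Filter.atTop (nhds ((1 - ε) * (L (M.VAdag h) - L vinf))) :=
      (tendsto_const_nhds.sub hLv).const_mul _
    have hT2 : Filter.Tendsto (fun t => L (M.VAdag (f (t + 1))) - L (M.VAdag (f t)))
        Filter.atTop (nhds 0) := by
      have := hLshift.sub hLv
      simpa using this
    exact le_of_tendsto_of_tendsto' hT1 hT2 hkey
  have hlt : L vinf < L (M.VAdag h) := hLp _ _ hdom
  nlinarith
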